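/- arXiv:1501.05185 — 3 statements merged into one kernel-verified Lean document; each statement's English description precedes it below -/
import Mathlib

section
/- Let 𝒜₁, 𝒜₂ be full additive subcategories of an additive category 𝒜, and let A = (A₁ ⊕ A₂, p) be an object of the idempotent completion of the lower triangular category 𝔏𝔗(𝒜₁,𝒜₂), where p = [[p₁₁,0],[p₂₁,p₂₂]]. Then the sequence 0 → (A₂,p₂₂) → A → (A₁,p₁₁) → 0, with maps given by the column (0, p₂₂)ᵀ and the row (p₁₁, 0), is split exact: the map with components π = (p₁₁, 0) and ρ = (p₂₂p₂₁, p₂₂) is an isomorphism from A to (A₁,p₁₁) ⊕ (A₂,p₂₂) in Idem 𝔏𝔗(𝒜₁,𝒜₂), with inverse the matrix [[p₁₁,0],[p₂₁p₁₁,p₂₂]]. -/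
open CategoryTheory CategoryTheory.Idempotents

universe v u

variable {A : Type u} [Category.{v} A] [Preadditive A]

/-- An object of the lower triangular category `𝔏𝔗(𝒜₁, 𝒜₂)`: a chosen direct sum
`F₁ ⊕ F₂` with `F₁` in the full subcategory on `P₁` and `F₂` in the one on `P₂`. -/
structure LTObj (P₁ P₂ : A → Prop) : Type u where
  X₁ : A
  mem₁ : P₁ X₁
  X₂ : A
  mem₂ : P₂ X₂

variable {P₁ P₂ : A → Prop}

/-- A morphism of the lower triangular category: a lower triangular matrix
`[[f₁₁, 0], [f₂₁, f₂₂]]`. -/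
@[ext]
structure LTHom (F G : LTObj P₁ P₂) : Type v where
  f₁₁ : F.X₁ ⟶ G.X₁
  f₂₁ : F.X₁ ⟶ G.X₂
  f₂₂ : F.X₂ ⟶ G.X₂

instance : Category (LTObj P₁ P₂) where
  Hom := LTHom
  id F := ⟨𝟙 _, 0, 𝟙 _⟩
  comp {F G H} f g := ⟨f.f₁₁ ≫ g.f₁₁, f.f₁₁ ≫ g.f₂₁ + f.f₂₁ ≫ g.f₂₂, f.f₂₂ ≫ g.f₂₂⟩
  id_comp f := by apply LTHom.ext <;> simp
  comp_id f := by apply LTHom.ext <;> simp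
  assoc f g h := by
    apply LTHom.ext <;> simp [Preadditive.add_comp, Preadditive.comp_add] <;> abel

namespace LTHom

@[simp] lemma comp_f₁₁ {F G H : LTObj P₁ P₂} (f : F ⟶ G) (g : G ⟶ H) :
    (f ≫ g).f₁₁ = f.f₁₁ ≫ g.f₁₁ := rfl
@[simp] lemma comp_f₂₁ {F G H : LTObj P₁ P₂} (f : F ⟶ G) (g : G ⟶ H) :
    (f ≫ g).f₂₁ = f.f₁₁ ≫ g.f₂₁ + f.f₂₁ ≫ g.f₂₂ := rfl
@[simp] lemma comp_f₂₂ {F G H : LTObj P₁ P₂} (f : F ⟶ G) (g : G ⟶ H) :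
    (f ≫ g).f₂₂ = f.f₂₂ ≫ g.f₂₂ := rfl
@[simp] lemma id_f₁₁ {F : LTObj P₁ P₂} : LTHom.f₁₁ (𝟙 F) = 𝟙 F.X₁ := rfl
@[simp] lemma id_f₂₁ {F : LTObj P₁ P₂} : LTHom.f₂₁ (𝟙 F) = 0 := rfl
@[simp] lemma id_f₂₂ {F : LTObj P₁ P₂} : LTHom.f₂₂ (𝟙 F) = 𝟙 F.X₂ := rfl

/-- Morphism groups of the lower triangular category. -/
instance instAddCommGroup (F G : LTObj P₁ P₂) : AddCommGroup (F ⟶ G) :=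
  let e : (F ⟶ G) ≃ (F.X₁ ⟶ G.X₁) × (F.X₁ ⟶ G.X₂) × (F.X₂ ⟶ G.X₂) :=
    { toFun := fun f => (f.f₁₁, f.f₂₁, f.f₂₂)
      invFun := fun x => ⟨x.1, x.2.1, x.2.2⟩
      left_inv := fun f => rfl
      right_inv := fun x => rfl }
  e.addCommGroup

@[simp] lemma add_f₁₁ {F G : LTObj P₁ P₂} (f g : F ⟶ G) : (f + g).f₁₁ = f.f₁₁ + g.f₁₁ := rfl
@[simp] lemma add_f₂₁ {F G : LTObj P₁ P₂} (f g : F ⟶ G) : (f + g).f₂₁ = f.f₂₁ + g.f₂₁ := rfl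
@[simp] lemma add_f₂₂ {F G : LTObj P₁ P₂} (f g : F ⟶ G) : (f + g).f₂₂ = f.f₂₂ + g.f₂₂ := rfl
@[simp] lemma zero_f₁₁ {F G : LTObj P₁ P₂} : (0 : F ⟶ G).f₁₁ = 0 := rfl
@[simp] lemma zero_f₂₁ {F G : LTObj P₁ P₂} : (0 : F ⟶ G).f₂₁ = 0 := rfl
@[simp] lemma zero_f₂₂ {F G : LTObj P₁ P₂} : (0 : F ⟶ G).f₂₂ = 0 := rfl

end LTHom

/-- The lower triangular category is additive (preadditive). -/
instance : Preadditive (LTObj P₁ P₂) where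
  add_comp := by intros; apply LTHom.ext <;> simp [Preadditive.add_comp, Preadditive.comp_add] <;> abel
  comp_add := by intros; apply LTHom.ext <;> simp [Preadditive.add_comp, Preadditive.comp_add] <;> abel

/-- The "diagonal" object `(A₁,p₁₁) ⊕ (A₂,p₂₂)` of `Idem 𝔏𝔗(𝒜₁,𝒜₂)` associated to an
object `A = (A₁ ⊕ A₂, [[p₁₁,0],[p₂₁,p₂₂]])`. -/
def diagObj (P : Karoubi (LTObj P₁ P₂)) : Karoubi (LTObj P₁ P₂) where
  X := P.X
  p := ⟨P.p.f₁₁, 0, P.p.f₂₂⟩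
  idem := by
    have h11 := congrArg LTHom.f₁₁ P.idem
    have h22 := congrArg LTHom.f₂₂ P.idem
    simp only [LTHom.comp_f₁₁] at h11
    simp only [LTHom.comp_f₂₂] at h22
    apply LTHom.ext <;> simp [h11, h22]

/-- For an object `A = (A₁ ⊕ A₂, p)` of `Idem 𝔏𝔗(𝒜₁,𝒜₂)` with
`p = [[p₁₁,0],[p₂₁,p₂₂]]`, the sequence `0 → (A₂,p₂₂) → A → (A₁,p₁₁) → 0` (maps:
the column `(0,p₂₂)ᵀ` and the row `(p₁₁,0)`) is split exact:  the morphism with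
components `π = (p₁₁, 0)` and `ρ = (p₂₂p₂₁, p₂₂)`, i.e. the matrix
`[[p₁₁,0],[p₂₂p₂₁,p₂₂]]`, is an isomorphism from `A` to `(A₁,p₁₁) ⊕ (A₂,p₂₂)`
in `Idem 𝔏𝔗(𝒜₁,𝒜₂)`, with inverse the matrix `[[p₁₁,0],[p₂₁p₁₁,p₂₂]]`. -/
theorem lower_triangular_split_exact (P : Karoubi (LTObj P₁ P₂)) :
    ∃ e : P ≅ diagObj P,
      e.hom.f = LTHom.mk P.p.f₁₁ (P.p.f₂₁ ≫ P.p.f₂₂) P.p.f₂₂ ∧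
      e.inv.f = LTHom.mk P.p.f₁₁ (P.p.f₁₁ ≫ P.p.f₂₁) P.p.f₂₂ := by
  have h11 : P.p.f₁₁ ≫ P.p.f₁₁ = P.p.f₁₁ := congrArg LTHom.f₁₁ P.idem
  have h22 : P.p.f₂₂ ≫ P.p.f₂₂ = P.p.f₂₂ := congrArg LTHom.f₂₂ P.idem
  have h21 : P.p.f₁₁ ≫ P.p.f₂₁ + P.p.f₂₁ ≫ P.p.f₂₂ = P.p.f₂₁ :=
    congrArg LTHom.f₂₁ P.idem
  have hz : P.p.f₁₁ ≫ P.p.f₂₁ ≫ P.p.f₂₂ = 0 := by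
    have := congrArg (fun x => P.p.f₁₁ ≫ x ≫ P.p.f₂₂) h21
    simp only [Preadditive.comp_add, Preadditive.add_comp, Category.assoc] at this
    rw [reassoc_of% h11, h22] at this
    have h2 : P.p.f₁₁ ≫ P.p.f₂₁ ≫ P.p.f₂₂ + P.p.f₁₁ ≫ P.p.f₂₁ ≫ P.p.f₂₂ =
        P.p.f₁₁ ≫ P.p.f₂₁ ≫ P.p.f₂₂ := this
    linear_combination (norm := abel) h2
  refine ⟨{
    hom := ⟨LTHom.mk P.p.f₁₁ (P.p.f₂₁ ≫ P.p.f₂₂) P.p.f₂₂, ?_⟩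
    inv := ⟨LTHom.mk P.p.f₁₁ (P.p.f₁₁ ≫ P.p.f₂₁) P.p.f₂₂, ?_⟩
    hom_inv_id := ?_
    inv_hom_id := ?_ }, rfl, rfl⟩
  · apply LTHom.ext <;>
      simp [diagObj, h11, h22, reassoc_of% h11, reassoc_of% hz, reassoc_of% h22, hz]
  · apply LTHom.ext <;>
      simp [diagObj, h11, h22, reassoc_of% h11, reassoc_of% h22, hz, h21]
  · apply Karoubi.hom_ext_iff.mpr
    apply LTHom.ext <;>
      simp [diagObj, Karoubi.comp_f, h11, h22, reassoc_of% h11, h21]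
  · apply Karoubi.hom_ext_iff.mpr
    apply LTHom.ext <;>
      simp [diagObj, Karoubi.comp_f, h11, h22, reassoc_of% h11, hz]
end

section
/- Let K be a Q-systematic ring and a ∈ Q with 1 ∈ K_a·K_{a⁻¹}. Then K_a is a finitely generated projective right K_1-module. -/
open Pointwise MulOpposite

universe u v

variable {Q : Type u} [Group Q] {K : Type v} [Ring K]

/-- The degree-one component `K_1` of a `Q`-systematic ring, as a subring of `K`. -/
def systDegreeOne (𝒜 : Q → AddSubgroup K)
    (hmul : ∀ {g h : Q} {a b : K}, a ∈ 𝒜 g → b ∈ 𝒜 h → a * b ∈ 𝒜 (g * h))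
    (hone : (1 : K) ∈ 𝒜 1) : Subring K where
  carrier := 𝒜 1
  add_mem' := fun ha hb => (𝒜 1).add_mem ha hb
  zero_mem' := (𝒜 1).zero_mem
  neg_mem' := fun ha => (𝒜 1).neg_mem ha
  one_mem' := hone
  mul_mem' := fun ha hb => by simpa using hmul ha hb

/-- The component `K_a` of a `Q`-systematic ring is a right `K_1`-module (i.e. a module over
`(K_1)ᵐᵒᵖ`) via multiplication in `K`. -/
def systComponentModule (𝒜 : Q → AddSubgroup K)
    (hmul : ∀ {g h : Q} {a b : K}, a ∈ 𝒜 g → b ∈ 𝒜 h → a * b ∈ 𝒜 (g * h))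
    (hone : (1 : K) ∈ 𝒜 1) (a : Q) :
    Module (systDegreeOne 𝒜 hmul hone)ᵐᵒᵖ (𝒜 a) where
  smul r m := ⟨m.1 * (r.unop : K), by
    simpa using hmul m.2 (show (r.unop : K) ∈ 𝒜 1 from r.unop.2)⟩
  one_smul m := by apply Subtype.ext; simp [HSMul.hSMul, SMul.smul]
  mul_smul r s m := by apply Subtype.ext; simp [HSMul.hSMul, SMul.smul, mul_assoc]
  smul_zero r := by apply Subtype.ext; simp [HSMul.hSMul, SMul.smul]
  smul_add r m n := by apply Subtype.ext; simp [HSMul.hSMul, SMul.smul, add_mul]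
  add_smul r s m := by apply Subtype.ext; simp [HSMul.hSMul, SMul.smul, mul_add]
  zero_smul m := by apply Subtype.ext; simp [HSMul.hSMul, SMul.smul]

/-- Let `K` be a `Q`-systematic ring and `a ∈ Q` with `1 ∈ K_a·K_{a⁻¹}` (finite sums of
products).  Then `K_a` is a finitely generated projective right `K_1`-module. -/
theorem component_fg_projective (𝒜 : Q → AddSubgroup K)
    (hsup : (⨆ g, 𝒜 g) = ⊤)
    (hmul : ∀ {g h : Q} {a b : K}, a ∈ 𝒜 g → b ∈ 𝒜 h → a * b ∈ 𝒜 (g * h))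
    (hone : (1 : K) ∈ 𝒜 1) (a : Q)
    (h : (1 : K) ∈ AddSubgroup.closure ((𝒜 a : Set K) * (𝒜 a⁻¹ : Set K))) :
    @Module.Finite (systDegreeOne 𝒜 hmul hone)ᵐᵒᵖ (𝒜 a) _ _
        (systComponentModule 𝒜 hmul hone a) ∧
      @Module.Projective (systDegreeOne 𝒜 hmul hone)ᵐᵒᵖ _ (𝒜 a) _
        (systComponentModule 𝒜 hmul hone a) := by
  classical
  letI : Module (systDegreeOne 𝒜 hmul hone)ᵐᵒᵖ (𝒜 a) := systComponentModule 𝒜 hmul hone a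
  let R := (systDegreeOne 𝒜 hmul hone)ᵐᵒᵖ
  -- Step 1: extract a finite representation 1 = ∑ xᵢ * yᵢ
  obtain ⟨n, x, y, hx, hy, hsum⟩ :
      ∃ (n : ℕ) (x y : Fin n → K), (∀ i, x i ∈ 𝒜 a) ∧ (∀ i, y i ∈ 𝒜 a⁻¹) ∧
        ∑ i, x i * y i = 1 := by
    have : ∀ z, z ∈ AddSubgroup.closure ((𝒜 a : Set K) * (𝒜 a⁻¹ : Set K)) →
        ∃ (n : ℕ) (x y : Fin n → K), (∀ i, x i ∈ 𝒜 a) ∧ (∀ i, y i ∈ 𝒜 a⁻¹) ∧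
          ∑ i, x i * y i = z := by
      intro z hz
      induction hz using AddSubgroup.closure_induction with
      | mem w hw =>
        obtain ⟨u, hu, v, hv, rfl⟩ := hw
        exact ⟨1, fun _ => u, fun _ => v, fun _ => hu, fun _ => hv, by simp⟩
      | zero => exact ⟨0, ![], ![], by simp, by simp, by simp⟩
      | add w₁ w₂ _ _ ih₁ ih₂ =>
        obtain ⟨n₁, x₁, y₁, hx₁, hy₁, hs₁⟩ := ih₁
        obtain ⟨n₂, x₂, y₂, hx₂, hy₂, hs₂⟩ := ih₂
        refine ⟨n₁ + n₂, Fin.append x₁ x₂, Fin.append y₁ y₂, ?_, ?_, ?_⟩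
        · intro i
          refine Fin.addCases (fun j => ?_) (fun j => ?_) i
          · rw [Fin.append_left]; exact hx₁ _
          · rw [Fin.append_right]; exact hx₂ _
        · intro i
          refine Fin.addCases (fun j => ?_) (fun j => ?_) i
          · rw [Fin.append_left]; exact hy₁ _
          · rw [Fin.append_right]; exact hy₂ _
        · rw [Fin.sum_univ_add]
          simp only [Fin.append_left, Fin.append_right, hs₁, hs₂]
      | neg w _ ih =>
        obtain ⟨n, x, y, hx, hy, hs⟩ := ih
        exact ⟨n, fun i => -x i, y, fun i => (𝒜 a).neg_mem (hx i),
          hy, by simp only [neg_mul]; rw [Finset.sum_neg_distrib, hs]⟩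
    exact this 1 h
  -- Step 2: dual basis maps
  let xs : Fin n → (𝒜 a) := fun i => ⟨x i, hx i⟩
  have hcoord : ∀ (i : Fin n) (m : 𝒜 a), y i * (m : K) ∈ systDegreeOne 𝒜 hmul hone := by
    intro i m
    exact (show y i * (m : K) ∈ 𝒜 1 by simpa using hmul (hy i) m.2)
  have hsmul : ∀ (r : R) (m : 𝒜 a), ((r • m : 𝒜 a) : K) = (m : K) * (r.unop : K) := fun _ _ => rfl
  let s : (𝒜 a) →ₗ[R] (Fin n → R) :=
    { toFun := fun m i => op ⟨y i * (m : K), hcoord i m⟩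
      map_add' := by
        intro m₁ m₂
        funext i
        simp only [Pi.add_apply, ← op_add]
        congr 1
        exact Subtype.ext (by push_cast; rw [mul_add])
      map_smul' := by
        intro r m
        funext i
        refine unop_injective (Subtype.ext ?_)
        rw [RingHom.id_apply, Pi.smul_apply, smul_eq_mul, unop_mul, unop_op]
        push_cast [hsmul]
        simp [mul_assoc] }
  let π : (Fin n → R) →ₗ[R] (𝒜 a) :=
    { toFun := fun c => ∑ i, c i • xs i
      map_add' := by
        intro c d
        simp only [Pi.add_apply, add_smul, Finset.sum_add_distrib]
      map_smul' := by
        intro r c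
        simp only [Pi.smul_apply, smul_eq_mul, RingHom.id_apply, mul_smul, ← Finset.smul_sum] }
  have hps : π.comp s = LinearMap.id := by
    refine LinearMap.ext fun m => Subtype.ext ?_
    have : ((π (s m) : 𝒜 a) : K) = ∑ i, x i * (y i * (m : K)) := by
      simp only [π, s, LinearMap.coe_mk, AddHom.coe_mk, LinearMap.coe_comp, Function.comp_apply]
      rw [AddSubmonoidClass.coe_finset_sum]
      refine Finset.sum_congr rfl fun i _ => ?_
      rw [hsmul]
      simp [xs, mul_comm]
    show ((π (s m) : 𝒜 a) : K) = (m : K)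
    rw [this]
    simp_rw [← mul_assoc, ← Finset.sum_mul, hsum, one_mul]
  constructor
  · exact Module.Finite.of_surjective π (fun m => ⟨s m, by rw [← LinearMap.comp_apply, hps, LinearMap.id_apply]⟩)
  · exact Module.Projective.of_split s π hps
end

section
/- Let K be a Q-systematic ring and a ∈ Q with 1 ∈ K_{a⁻¹}·K_a. Then the natural map ν : K_{a⁻¹} ⊗_{K_1} K → ⟨a⟩K, s ⊗ r ↦ sr, is an isomorphism of right K-modules (indeed of Q-systematic K-modules), where ⟨a⟩K denotes the a-shift of K. -/
open Pointwise

universe u v w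

/-- Let `K` be a `Q`-systematic ring and `a ∈ Q` with `1 ∈ K_{a⁻¹}·K_a`.  Then the natural
map `ν : K_{a⁻¹} ⊗_{K_1} K → ⟨a⟩K`, `s ⊗ r ↦ s·r`, is an isomorphism of right `K`-modules,
indeed of `Q`-systematic `K`-modules.  Formally: (1) the multiplication map
`K_{a⁻¹} × K → K = ⟨a⟩K` is a universal `K_1`-balanced biadditive map, i.e. it satisfies
the universal property of the tensor product `K_{a⁻¹} ⊗_{K_1} K` (so `ν` is bijective);
(2) `ν` identifies the degree-`q` part `K_{a⁻¹}·K_q` of the tensor product with the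
degree-`q` part `(⟨a⟩K)_q = K_{a⁻¹q}` of the shift `⟨a⟩K`. -/
theorem shift_eq_tensor {Q : Type u} [Group Q] {K : Type v} [Ring K]
    (𝒜 : Q → AddSubgroup K)
    (hsup : (⨆ g, 𝒜 g) = ⊤)
    (hmul : ∀ {g h : Q} {a b : K}, a ∈ 𝒜 g → b ∈ 𝒜 h → a * b ∈ 𝒜 (g * h))
    (hone : (1 : K) ∈ 𝒜 1) (a : Q)
    (h : (1 : K) ∈ AddSubgroup.closure ((𝒜 a⁻¹ : Set K) * (𝒜 a : Set K))) :
    (∀ (P : Type w) [AddCommGroup P] (f : ↥(𝒜 a⁻¹) → K → P),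
      (∀ s s' r, f (s + s') r = f s r + f s' r) →
      (∀ s r r', f s (r + r') = f s r + f s r') →
      (∀ (s : ↥(𝒜 a⁻¹)) (k : K), k ∈ 𝒜 1 → ∀ (r : K) (s' : ↥(𝒜 a⁻¹)),
        (s' : K) = (s : K) * k → f s' r = f s (k * r)) →
      ∃! g : K →+ P, ∀ (s : ↥(𝒜 a⁻¹)) (r : K), g ((s : K) * r) = f s r) ∧
    (∀ q : Q, AddSubgroup.closure ((𝒜 a⁻¹ : Set K) * (𝒜 q : Set K)) = 𝒜 (a⁻¹ * q)) := by

  -- Extract a finite representation of 1 as a sum of products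
  obtain ⟨n, s, t, h1⟩ : ∃ (n : ℕ) (s : Fin n → ↥(𝒜 a⁻¹)) (t : Fin n → ↥(𝒜 a)),
      (1 : K) = ∑ i, (s i : K) * (t i : K) := by
    have key : ∀ x ∈ AddSubgroup.closure ((𝒜 a⁻¹ : Set K) * (𝒜 a : Set K)),
        ∃ (n : ℕ) (s : Fin n → ↥(𝒜 a⁻¹)) (t : Fin n → ↥(𝒜 a)),
          x = ∑ i, (s i : K) * (t i : K) := by
      intro x hx
      induction hx using AddSubgroup.closure_induction with
      | mem y hy =>
        obtain ⟨u, hu, v, hv, rfl⟩ := hy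
        exact ⟨1, fun _ => ⟨u, hu⟩, fun _ => ⟨v, hv⟩, by simp⟩
      | zero => exact ⟨0, ![], ![], by simp⟩
      | add x y hx hy ihx ihy =>
        obtain ⟨n, s, t, hx'⟩ := ihx
        obtain ⟨m, s', t', hy'⟩ := ihy
        refine ⟨n + m, Fin.append s s', Fin.append t t', ?_⟩
        rw [Fin.sum_univ_add]
        simp only [Fin.append_left, Fin.append_right]
        rw [← hx', ← hy']
      | neg x hx ihx =>
        obtain ⟨n, s, t, hx'⟩ := ihx
        refine ⟨n, fun i => -(s i), t, ?_⟩
        simp only [AddSubgroup.coe_neg, neg_mul, Finset.sum_neg_distrib]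
        rw [← hx']
    exact key 1 h
  constructor
  · intro P _ f hf1 hf2 hbal
    have hz1 : ∀ r, f 0 r = 0 := by
      intro r
      have h0 := hf1 0 0 r
      rw [add_zero] at h0
      exact (left_eq_add.mp h0)
    have hz2 : ∀ s, f s 0 = 0 := by
      intro s
      have h0 := hf2 s 0 0
      rw [add_zero] at h0
      exact (left_eq_add.mp h0)
    have hFsum : ∀ (r : K) (σ : Fin n → ↥(𝒜 a⁻¹)),
        f (∑ i, σ i) r = ∑ i, f (σ i) r :=
      fun r σ => map_sum
        ({ toFun := fun s => f s r, map_zero' := hz1 r,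
           map_add' := fun x y => hf1 x y r } : ↥(𝒜 a⁻¹) →+ P) σ Finset.univ
    refine ⟨{ toFun := fun r => ∑ i, f (s i) ((t i : K) * r),
              map_zero' := by simp [hz2],
              map_add' := by intro x y; simp [mul_add, hf2, Finset.sum_add_distrib] },
            ?_, ?_⟩
    · intro s₀ r
      simp only [AddMonoidHom.coe_mk, ZeroHom.coe_mk]
      have hk : ∀ i, ((t i : K) * (s₀ : K)) ∈ 𝒜 1 := by
        intro i
        have := hmul (t i).2 s₀.2
        rwa [mul_inv_cancel] at this
      set σ : Fin n → ↥(𝒜 a⁻¹) := fun i =>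
        ⟨(s i : K) * ((t i : K) * (s₀ : K)), by
          have := hmul (s i).2 (hk i)
          rwa [mul_one] at this⟩ with hσ
      have step : ∀ i, f (s i) ((t i : K) * ((s₀ : K) * r)) = f (σ i) r := by
        intro i
        have := hbal (s i) ((t i : K) * (s₀ : K)) (hk i) r (σ i) rfl
        rw [this, mul_assoc]
      have hσsum : (∑ i, σ i) = s₀ := by
        apply Subtype.ext
        push_cast [hσ]
        calc ∑ i, (s i : K) * ((t i : K) * (s₀ : K))
            = (∑ i, (s i : K) * (t i : K)) * (s₀ : K) := by
              rw [Finset.sum_mul]; simp [mul_assoc]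
          _ = (s₀ : K) := by rw [← h1, one_mul]
      calc ∑ i, f (s i) ((t i : K) * ((s₀ : K) * r))
          = ∑ i, f (σ i) r := by simp only [step]
        _ = f (∑ i, σ i) r := (hFsum r σ).symm
        _ = f s₀ r := by rw [hσsum]
    · intro g' hg'
      ext r
      have hr : r = ∑ i, (s i : K) * ((t i : K) * r) := by
        calc r = (1 : K) * r := (one_mul r).symm
          _ = (∑ i, (s i : K) * (t i : K)) * r := by rw [← h1]
          _ = ∑ i, (s i : K) * ((t i : K) * r) := by
              rw [Finset.sum_mul]; simp [mul_assoc]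
      conv_lhs => rw [hr]
      rw [map_sum]
      simp only [hg', AddMonoidHom.coe_mk, ZeroHom.coe_mk]
  · intro q
    apply le_antisymm
    · rw [AddSubgroup.closure_le]
      rintro x ⟨u, hu, v, hv, rfl⟩
      exact hmul hu hv
    · intro x hx
      have hr : x = ∑ i, (s i : K) * ((t i : K) * x) := by
        calc x = (1 : K) * x := (one_mul x).symm
          _ = (∑ i, (s i : K) * (t i : K)) * x := by rw [← h1]
          _ = ∑ i, (s i : K) * ((t i : K) * x) := by
              rw [Finset.sum_mul]; simp [mul_assoc]
      rw [hr]
      apply sum_mem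
      intro i _
      apply AddSubgroup.subset_closure
      refine Set.mul_mem_mul (s i).2 ?_
      have := hmul (t i).2 hx
      rwa [mul_inv_cancel_left] at this
end
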